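/- Let S = Sym(ω), κ a regular cardinal, and suppose ⟨λ_α : α < κ⟩ is a strictly increasing sequence of regular cardinals with λ_α ∈ CF(S) for all α < κ. Suppose the reduced product ∏_{α<κ} λ_α modulo the ideal J^{bd}_κ of bounded subsets of κ has true cofinality λ. Then κ ∈ CF(S) or λ ∈ CF(S). -/
import Mathlib


/-- `S = Sym(ω)` is the union of a chain of `κ` proper subgroups,
indexed by the ordinals below `κ.ord`. -/
def SymUnionChain (κ : Cardinal) : Prop :=
  ∃ G : Ordinal → Subgroup (Equiv.Perm ℕ),
    (∀ i j : Ordinal, i ≤ j → G i ≤ G j) ∧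
    (∀ i < κ.ord, G i ≠ ⊤) ∧
    (∀ g : Equiv.Perm ℕ, ∃ i < κ.ord, g ∈ G i)

/-- `κ ∈ CF(S)`: `κ` is regular and `Sym(ω)` is the union of a chain of `κ`
proper subgroups. -/
def MemCF (κ : Cardinal) : Prop :=
  κ.IsRegular ∧ SymUnionChain κ

/-- Theorem 2.15: if `κ` is regular, `⟨λ_α : α < κ⟩` is a strictly increasing
sequence of regular cardinals with `λ_α ∈ CF(S)`, and the reduced product
`∏_{α<κ} λ_α` modulo the bounded ideal `J^{bd}_κ` has true cofinality `λ`,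
then `κ ∈ CF(S)` or `λ ∈ CF(S)`. -/
theorem stmt_6 (κ : Cardinal) (hκ : κ.IsRegular)
    (lam : Ordinal → Cardinal)
    (hmono : ∀ α β : Ordinal, α < β → β < κ.ord → lam α < lam β)
    (hreg : ∀ α < κ.ord, (lam α).IsRegular)
    (hCF : ∀ α < κ.ord, MemCF (lam α))
    (lambda : Cardinal) (hlam : lambda.IsRegular)
    (F : Ordinal → Ordinal → Ordinal)
    (hFmem : ∀ β < lambda.ord, ∀ α < κ.ord, F β α < (lam α).ord)
    (hFinc : ∀ β γ : Ordinal, β < γ → γ < lambda.ord →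
      ∃ i < κ.ord, ∀ α : Ordinal, α < κ.ord → F γ α ≤ F β α → α < i)
    (hFcof : ∀ h : Ordinal → Ordinal, (∀ α < κ.ord, h α < (lam α).ord) →
      ∃ β < lambda.ord, ∃ i < κ.ord,
        ∀ α : Ordinal, α < κ.ord → F β α ≤ h α → α < i) :
    MemCF κ ∨ MemCF lambda := by
  classical
  have hκ0 : (0 : Ordinal) < κ.ord := by
    calc (0 : Ordinal) < Cardinal.aleph0.ord := by
          rw [Cardinal.ord_aleph0]; exact Ordinal.omega0_pos
      _ ≤ κ.ord := Cardinal.ord_le_ord.mpr hκ.aleph0_le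
  have hlam0 : (0 : Ordinal) < lambda.ord := by
    calc (0 : Ordinal) < Cardinal.aleph0.ord := by
          rw [Cardinal.ord_aleph0]; exact Ordinal.omega0_pos
      _ ≤ lambda.ord := Cardinal.ord_le_ord.mpr hlam.aleph0_le
  -- choose witnessing chains for each `lam α`
  have hG : ∀ α : Ordinal, ∃ Gc : Ordinal → Subgroup (Equiv.Perm ℕ),
      (∀ i j : Ordinal, i ≤ j → Gc i ≤ Gc j) ∧
      (α < κ.ord → (∀ j < (lam α).ord, Gc j ≠ ⊤) ∧
        ∀ g : Equiv.Perm ℕ, ∃ j < (lam α).ord, g ∈ Gc j) := by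
    intro α
    by_cases h : α < κ.ord
    · obtain ⟨Gc, h1, h2, h3⟩ := (hCF α h).2
      exact ⟨Gc, h1, fun _ => ⟨h2, h3⟩⟩
    · exact ⟨fun _ => ⊤, fun _ _ _ => le_rfl, fun h' => absurd h' h⟩
  choose G Gmono Gprop using hG
  set K : Ordinal → Ordinal → Subgroup (Equiv.Perm ℕ) :=
    fun β i => ⨅ (α : Ordinal) (_ : i ≤ α) (_ : α < κ.ord), G α (F β α) with hKdef
  have hKmem : ∀ β i (g : Equiv.Perm ℕ),
      g ∈ K β i ↔ ∀ α : Ordinal, i ≤ α → α < κ.ord → g ∈ G α (F β α) := by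
    intro β i g
    simp [hKdef, Subgroup.mem_iInf]
  have hKmono : ∀ β, ∀ i j : Ordinal, i ≤ j → K β i ≤ K β j := by
    intro β i j hij g hg
    rw [hKmem] at hg ⊢
    intro α h1 h2
    exact hg α (hij.trans h1) h2
  have hne : Nonempty {i : Ordinal // i < κ.ord} := ⟨⟨0, hκ0⟩⟩
  set H : Ordinal → Subgroup (Equiv.Perm ℕ) :=
    fun β => ⨆ i : {i : Ordinal // i < κ.ord}, K β i.1 with hHdef
  have hHmem : ∀ β (g : Equiv.Perm ℕ), g ∈ H β ↔ ∃ i < κ.ord, g ∈ K β i := by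
    intro β g
    rw [hHdef]
    rw [Subgroup.mem_iSup_of_directed]
    · constructor
      · rintro ⟨⟨i, hi⟩, hg⟩; exact ⟨i, hi, hg⟩
      · rintro ⟨i, hi, hg⟩; exact ⟨⟨i, hi⟩, hg⟩
    · rintro ⟨i, hi⟩ ⟨j, hj⟩
      exact ⟨⟨max i j, max_lt hi hj⟩, hKmono β i _ (le_max_left i j),
        hKmono β j _ (le_max_right i j)⟩
  -- covering of the H-chain
  have hHcov : ∀ g : Equiv.Perm ℕ, ∃ β < lambda.ord, g ∈ H β := by
    intro g
    have hh : ∀ α : Ordinal, ∃ j : Ordinal,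
        α < κ.ord → j < (lam α).ord ∧ g ∈ G α j := by
      intro α
      by_cases h : α < κ.ord
      · obtain ⟨j, hj1, hj2⟩ := (Gprop α h).2 g
        exact ⟨j, fun _ => ⟨hj1, hj2⟩⟩
      · exact ⟨0, fun h' => absurd h' h⟩
    choose h hhh using hh
    obtain ⟨β, hβ, i, hi, hdom⟩ := hFcof h (fun α hα => (hhh α hα).1)
    refine ⟨β, hβ, (hHmem β g).mpr ⟨i, hi, (hKmem β i g).mpr ?_⟩⟩
    intro α h1 h2
    have hlt : h α < F β α := by
      by_contra hc
      exact absurd (hdom α h2 (not_lt.mp hc)) (not_lt.mpr h1)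
    exact Gmono α (h α) (F β α) hlt.le ((hhh α h2).2)
  -- monotonicity of H below lambda.ord
  have hHle : ∀ β γ : Ordinal, β ≤ γ → γ < lambda.ord → H β ≤ H γ := by
    intro β γ hβγ hγ
    rcases eq_or_lt_of_le hβγ with rfl | hlt
    · exact le_rfl
    obtain ⟨i0, hi0, hd⟩ := hFinc β γ hlt hγ
    intro g hg
    obtain ⟨i, hi, hgK⟩ := (hHmem β g).mp hg
    refine (hHmem γ g).mpr ⟨max i i0, max_lt hi hi0, (hKmem γ _ g).mpr ?_⟩
    intro α h1 h2
    have hFlt : F β α < F γ α := by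
      by_contra hc
      exact absurd (hd α h2 (not_lt.mp hc))
        (not_lt.mpr ((le_max_right i i0).trans h1))
    exact Gmono α _ _ hFlt.le
      ((hKmem β i g).mp hgK α ((le_max_left i i0).trans h1) h2)
  by_cases htop : ∃ β < lambda.ord, H β = ⊤
  · -- some H β is everything: κ ∈ CF(S) via the chain K β
    obtain ⟨β, hβ, hβtop⟩ := htop
    refine Or.inl ⟨hκ, K β, hKmono β, ?_, ?_⟩
    · intro i hi hKi
      have hGi : G i (F β i) = ⊤ := by
        rw [eq_top_iff]
        intro g _
        have : g ∈ K β i := by rw [hKi]; trivial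
        exact (hKmem β i g).mp this i le_rfl hi
      exact (Gprop i hi).1 (F β i) (hFmem β hβ i hi) hGi
    · intro g
      have : g ∈ H β := by rw [hβtop]; trivial
      obtain ⟨i, hi, hgi⟩ := (hHmem β g).mp this
      exact ⟨i, hi, hgi⟩
  · -- all H β proper: lambda ∈ CF(S)
    push_neg at htop
    refine Or.inr ⟨hlam, fun β => ⨆ γ : {γ : Ordinal // γ ≤ β ∧ γ < lambda.ord}, H γ.1,
      ?_, ?_, ?_⟩
    · intro i j hij
      refine iSup_le ?_
      rintro ⟨γ, hγ1, hγ2⟩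
      exact le_iSup_of_le ⟨γ, hγ1.trans hij, hγ2⟩ le_rfl
    · intro β hβ hc
      have hle : (⨆ γ : {γ : Ordinal // γ ≤ β ∧ γ < lambda.ord}, H γ.1) ≤ H β := by
        refine iSup_le ?_
        rintro ⟨γ, hγ1, hγ2⟩
        exact hHle γ β hγ1 hβ
      exact htop β hβ (top_unique (hc ▸ hle))
    · intro g
      obtain ⟨β, hβ, hg⟩ := hHcov g
      refine ⟨β, hβ, ?_⟩
      have := le_iSup (fun γ : {γ : Ordinal // γ ≤ β ∧ γ < lambda.ord} => H γ.1)
        ⟨β, le_rfl, hβ⟩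
      exact this hg
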